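/- Let ν ≥ 2 be an integer, let φ ∈ L²(ℝ) vanish almost everywhere outside [−ν+1, ν], let j ∈ ℕ satisfy M := 2^j ≥ 2ν, and let ξ ∈ ℂ^M. Then for every n ∈ ℕ: Σ_{m=ν}^{M−ν−1} (∫₀¹ φ_{j,m}(x) w_n(x) dx) ξ_m = 2^{−j/2} Σ_{l=−ν+1}^{ν−1} (∫₀¹ φ(x+l) w_{⌊n/2^j⌋}(x) dx) · Σ_{m=ν}^{M−ν−1} w_n((l+m)/2^j) ξ_m, where φ_{j,m}(x) := 2^{j/2} φ(2^j x − m). -/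

import Mathlib

open MeasureTheory

/-- `natDigit n i` is the `i`-th binary digit `n^(i)` (for `i ≥ 1`) of `n ∈ ℕ`,
so that `n = Σ_{i ≥ 1} n^(i) 2^(i-1)`. -/
def natDigit (n i : ℕ) : ℕ := (n / 2 ^ (i - 1)) % 2

/-- `dyadicDigit x i` is the `i`-th dyadic digit `x^(i) = ⌊2^i x⌋ − 2⌊2^(i−1) x⌋`
(for `i ≥ 1`) of `x ∈ [0,1)`. -/
noncomputable def dyadicDigit (x : ℝ) (i : ℕ) : ℤ :=
  ⌊(2 : ℝ) ^ i * x⌋ - 2 * ⌊(2 : ℝ) ^ (i - 1) * x⌋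

/-- The sequency-ordered Walsh function
`w_n(x) = (−1)^{Σ_{i≥1} (n^(i) + n^(i+1)) x^(i)}`; the sum is finite since
`n^(i) = 0` for `i > n`, so it may be truncated at `i = n + 1`. -/
noncomputable def walsh (n : ℕ) (x : ℝ) : ℝ :=
  (-1 : ℝ) ^ ∑ i ∈ Finset.Icc 1 (n + 1),
    (natDigit n i + natDigit n (i + 1)) * (dyadicDigit x i).toNat

/-- The dyadic XOR `x ⊕ y := Σ_{i≥1} |x^(i) − y^(i)| 2^{−i}` of `x, y ∈ [0,1)`. -/
noncomputable def dyadicXor (x y : ℝ) : ℝ :=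
  ∑' i : ℕ, |(dyadicDigit x (i + 1) : ℝ) - (dyadicDigit y (i + 1) : ℝ)| / 2 ^ (i + 1)

lemma natDigit_eq_zero {n i : ℕ} (h : n < 2 ^ (i - 1)) : natDigit n i = 0 := by
  unfold natDigit; rw [Nat.div_eq_of_lt h]

lemma natDigit_eq_zero_of_lt {n i : ℕ} (h : n + 2 ≤ i) : natDigit n i = 0 := by
  apply natDigit_eq_zero
  calc n < 2 ^ n := Nat.lt_two_pow_self (n := n)
  _ ≤ 2 ^ (i - 1) := Nat.pow_le_pow_right (by norm_num) (by omega)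

lemma walsh_trunc (n N : ℕ) (hN : n + 1 ≤ N) (x : ℝ) :
    walsh n x = (-1 : ℝ) ^ ∑ i ∈ Finset.Icc 1 N,
      (natDigit n i + natDigit n (i + 1)) * (dyadicDigit x i).toNat := by
  unfold walsh
  congr 1
  apply Finset.sum_subset
  · intro i hi
    simp only [Finset.mem_Icc] at hi ⊢; omega
  · intro i hi hni
    simp only [Finset.mem_Icc] at hi hni
    have h1 : natDigit n i = 0 := natDigit_eq_zero_of_lt (by omega)
    have h2 : natDigit n (i + 1) = 0 := natDigit_eq_zero_of_lt (by omega)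
    rw [h1, h2]; ring

lemma natDigit_shift (n j i : ℕ) (hi : 1 ≤ i) :
    natDigit n (i + j) = natDigit (n / 2 ^ j) i := by
  unfold natDigit
  rw [Nat.div_div_eq_div_mul, ← pow_add]
  have h : i + j - 1 = j + (i - 1) := by omega
  rw [h]

lemma floor_add_div_nat {x : ℝ} (hx0 : 0 ≤ x) (hx1 : x < 1) (k d : ℕ) (hd : 0 < d) :
    ⌊(x + (k : ℝ)) / (d : ℝ)⌋ = (k / d : ℕ) := by
  have hd' : (0 : ℝ) < d := by exact_mod_cast hd
  have h1 : ((k / d : ℕ) : ℝ) * d ≤ k := by exact_mod_cast Nat.div_mul_le_self k d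
  have h2 : (k : ℝ) + 1 ≤ ((k / d : ℕ) : ℝ) * d + d := by
    exact_mod_cast Nat.succ_le_of_lt (Nat.lt_div_mul_add hd)
  rw [Int.floor_eq_iff, Int.cast_natCast]
  constructor
  · rw [le_div_iff₀ hd']; linarith
  · rw [div_lt_iff₀ hd', add_mul, one_mul]; linarith

lemma dyadicDigit_shift_low {x : ℝ} (hx0 : 0 ≤ x) (hx1 : x < 1) (k j i : ℕ)
    (hi1 : 1 ≤ i) (hij : i ≤ j) :
    dyadicDigit ((x + (k : ℝ)) / 2 ^ j) i = natDigit k (j - i + 1) := by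
  have key : ∀ r : ℕ, r ≤ j → ⌊(2:ℝ)^r * ((x + k)/2^j)⌋ = (k / 2^(j-r) : ℕ) := by
    intro r hr
    have e : (2:ℝ)^r * ((x + k)/2^j) = (x + k) / ((2^(j-r) : ℕ) : ℝ) := by
      have h2 : (2:ℝ)^j = 2^(j-r) * 2^r := by rw [← pow_add]; congr 1; omega
      push_cast
      rw [h2]
      have : (2:ℝ)^(j-r) ≠ 0 := by positivity
      have : (2:ℝ)^r ≠ 0 := by positivity
      field_simp
    rw [e, floor_add_div_nat hx0 hx1 k _ (by positivity)]
  unfold dyadicDigit natDigit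
  rw [key i hij, key (i-1) (by omega)]
  have e3 : k / 2^(j-(i-1)) = (k / 2^(j-i)) / 2 := by
    rw [Nat.div_div_eq_div_mul, ← pow_succ]
    congr 2
    omega
  rw [e3]
  have h4 : (j - i + 1) - 1 = j - i := by omega
  rw [h4]
  omega

lemma dyadicDigit_shift_high {x : ℝ} (k j i : ℕ) (hij : j < i) :
    dyadicDigit ((x + (k : ℝ)) / 2 ^ j) i = dyadicDigit x (i - j) := by
  have key : ∀ r : ℕ, j ≤ r →
      ⌊(2:ℝ)^r * ((x + k)/2^j)⌋ = ⌊(2:ℝ)^(r-j) * x⌋ + ((2^(r-j) * k : ℕ) : ℤ) := by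
    intro r hr
    have e : (2:ℝ)^r * ((x + k)/2^j) = 2^(r-j) * x + ((2^(r-j) * k : ℕ) : ℝ) := by
      have h2 : (2:ℝ)^r = 2^(r-j) * 2^j := by rw [← pow_add]; congr 1; omega
      push_cast
      rw [h2]
      have : (2:ℝ)^j ≠ 0 := by positivity
      field_simp
    rw [e, Int.floor_add_natCast]
  unfold dyadicDigit
  rw [key i (by omega), key (i-1) (by omega)]
  have h1 : i - 1 - j = (i - j) - 1 := by omega
  have h2 : 2^(i-j) * k = 2 * (2^(i-1-j) * k) := by
    rw [← mul_assoc]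
    congr 1
    rw [← pow_succ']
    congr 1
    omega
  rw [h1] at *
  push_cast [h2]
  ring

lemma dyadicDigit_zero (i : ℕ) : dyadicDigit 0 i = 0 := by
  unfold dyadicDigit
  simp

lemma walsh_split (n j k : ℕ) {x : ℝ} (hx0 : 0 ≤ x) (hx1 : x < 1) :
    walsh n ((x + (k : ℝ)) / 2 ^ j) = walsh n ((k : ℝ) / 2 ^ j) * walsh (n / 2 ^ j) x := by
  have hzero : ((k : ℝ)) / 2 ^ j = ((0 : ℝ) + (k : ℝ)) / 2 ^ j := by rw [zero_add]
  set N := n + j + 1 with hN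
  rw [walsh_trunc n N (by omega) ((x + (k : ℝ)) / 2 ^ j),
      walsh_trunc n N (by omega) ((k : ℝ) / 2 ^ j),
      walsh_trunc (n / 2 ^ j) (n + 1) (by have := Nat.div_le_self n (2 ^ j); omega) x,
      ← pow_add]
  congr 1
  have hsplit : ∀ z : ℝ,
      ∑ i ∈ Finset.Icc 1 N, (natDigit n i + natDigit n (i + 1)) * (dyadicDigit z i).toNat
        = ∑ i ∈ Finset.Ico 1 (j + 1),
            (natDigit n i + natDigit n (i + 1)) * (dyadicDigit z i).toNat
          + ∑ i ∈ Finset.Ico (j + 1) (N + 1),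
            (natDigit n i + natDigit n (i + 1)) * (dyadicDigit z i).toNat := by
    intro z
    rw [← Finset.Ico_add_one_right_eq_Icc, Finset.sum_Ico_consecutive]
    · omega
    · omega
  rw [hsplit, hsplit]
  have hlow : ∑ i ∈ Finset.Ico 1 (j + 1),
      (natDigit n i + natDigit n (i + 1)) * (dyadicDigit ((x + (k : ℝ)) / 2 ^ j) i).toNat
      = ∑ i ∈ Finset.Ico 1 (j + 1),
      (natDigit n i + natDigit n (i + 1)) * (dyadicDigit ((k : ℝ) / 2 ^ j) i).toNat := by
    apply Finset.sum_congr rfl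
    intro i hi
    simp only [Finset.mem_Ico] at hi
    rw [hzero, dyadicDigit_shift_low hx0 hx1 k j i (by omega) (by omega),
        dyadicDigit_shift_low le_rfl one_pos k j i (by omega) (by omega)]
  have hhigh0 : ∑ i ∈ Finset.Ico (j + 1) (N + 1),
      (natDigit n i + natDigit n (i + 1)) * (dyadicDigit ((k : ℝ) / 2 ^ j) i).toNat = 0 := by
    apply Finset.sum_eq_zero
    intro i hi
    simp only [Finset.mem_Ico] at hi
    rw [hzero, dyadicDigit_shift_high k j i (by omega), dyadicDigit_zero]
    simp
  have hhigh : ∑ i ∈ Finset.Ico (j + 1) (N + 1),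
      (natDigit n i + natDigit n (i + 1)) * (dyadicDigit ((x + (k : ℝ)) / 2 ^ j) i).toNat
      = ∑ i ∈ Finset.Icc 1 (n + 1),
        (natDigit (n / 2 ^ j) i + natDigit (n / 2 ^ j) (i + 1)) * (dyadicDigit x i).toNat := by
    rw [Finset.sum_Ico_eq_sum_range]
    rw [show N + 1 - (j + 1) = n + 1 by omega]
    rw [← Finset.Ico_add_one_right_eq_Icc, Finset.sum_Ico_eq_sum_range]
    rw [show n + 1 + 1 - 1 = n + 1 by omega]
    apply Finset.sum_congr rfl
    intro i _
    rw [dyadicDigit_shift_high k j (j + 1 + i) (by omega)]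
    rw [show j + 1 + i - j = 1 + i by omega]
    congr 2
    · rw [show j + 1 + i = (1 + i) + j by omega, natDigit_shift n j (1 + i) (by omega)]
    · rw [show j + 1 + i + 1 = (1 + i + 1) + j by omega,
          natDigit_shift n j (1 + i + 1) (by omega)]
  rw [hlow, hhigh, hhigh0, add_zero]

lemma walsh_measurable (n : ℕ) : Measurable (walsh n) := by
  unfold walsh
  apply Measurable.comp (f := fun x => ∑ i ∈ Finset.Icc 1 (n + 1),
      (natDigit n i + natDigit n (i + 1)) * (dyadicDigit x i).toNat)
    (g := fun s : ℕ => (-1 : ℝ) ^ s) (measurable_from_top)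
  apply Finset.measurable_sum
  intro i _
  apply Measurable.mul measurable_const
  apply Measurable.comp (f := fun x => dyadicDigit x i) (g := Int.toNat) measurable_from_top
  unfold dyadicDigit
  exact (Measurable.floor (measurable_const.mul measurable_id)).sub
    ((Measurable.floor (measurable_const.mul measurable_id)).const_mul 2)

lemma walsh_abs (n : ℕ) (x : ℝ) : |walsh n x| = 1 := by
  unfold walsh
  rw [abs_pow, abs_neg, abs_one, one_pow]

lemma phi_intervalIntegrable (φ : ℝ → ℝ) (hL2 : MemLp φ 2 volume) (a b : ℝ) :
    IntervalIntegrable φ volume a b := by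
  rw [intervalIntegrable_iff, Set.uIoc]
  have h : MemLp φ 2 (volume.restrict (Set.Ioc (a ⊓ b) (a ⊔ b))) := hL2.restrict _
  exact h.integrable one_le_two

lemma comp_intervalIntegrable (φ : ℝ → ℝ) (hL2 : MemLp φ 2 volume) (j : ℕ) (c : ℝ)
    (a b : ℝ) : IntervalIntegrable (fun x => φ (2 ^ j * x - c)) volume a b := by
  have h1 := (phi_intervalIntegrable φ hL2 (2 ^ j * a - c) (2 ^ j * b - c)).comp_sub_right c
  rw [show 2 ^ j * a - c + c = 2 ^ j * a by ring, show 2 ^ j * b - c + c = 2 ^ j * b by ring]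
    at h1
  have h2 := h1.comp_mul_left (c := (2 : ℝ) ^ j)
  have e1 : (2 : ℝ) ^ j * a / 2 ^ j = a := by field_simp
  have e2 : (2 : ℝ) ^ j * b / 2 ^ j = b := by field_simp
  rwa [e1, e2] at h2

lemma prod_intervalIntegrable (φ : ℝ → ℝ) (hL2 : MemLp φ 2 volume) (j n : ℕ) (c : ℝ)
    (a b : ℝ) :
    IntervalIntegrable (fun x => φ (2 ^ j * x - c) * walsh n x) volume a b := by
  have h1 := comp_intervalIntegrable φ hL2 j c a b
  rw [intervalIntegrable_iff] at h1 ⊢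
  have h2 : Integrable (fun x => walsh n x * φ (2 ^ j * x - c))
      (volume.restrict (Set.uIoc a b)) := by
    apply h1.bdd_mul (c := 1) ((walsh_measurable n).aestronglyMeasurable.restrict)
    exact Filter.Eventually.of_forall fun x => by rw [Real.norm_eq_abs, walsh_abs]
  exact h2.congr (Filter.Eventually.of_forall fun x => mul_comm _ _)

lemma ae_ne_one : ∀ᵐ t : ℝ, t ≠ (1 : ℝ) := by
  rw [MeasureTheory.ae_iff]
  simp only [ne_eq, not_not]
  rw [Set.setOf_eq_eq_singleton]
  exact measure_singleton 1

lemma vanish (ν : ℕ) (φ : ℝ → ℝ)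
    (hsupp : ∀ᵐ x : ℝ, x ∉ Set.Icc (-(ν : ℝ) + 1) (ν : ℝ) → φ x = 0)
    (c : ℝ) (hc : (ν : ℝ) ≤ c ∨ c ≤ -(ν : ℝ)) (g : ℝ → ℝ) :
    ∫ t in (0:ℝ)..1, φ (t + c) * g t = 0 := by
  have hshift : ∀ᵐ t : ℝ, (t + c) ∉ Set.Icc (-(ν:ℝ)+1) (ν:ℝ) → φ (t + c) = 0 :=
    (measurePreserving_add_right volume c).quasiMeasurePreserving.ae hsupp
  have h : (∫ t in (0:ℝ)..1, φ (t + c) * g t) = ∫ t in (0:ℝ)..1, (0:ℝ) := by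
    apply intervalIntegral.integral_congr_ae
    filter_upwards [hshift, ae_ne_one] with t hφ ht hmem
    rw [Set.uIoc_of_le (by norm_num : (0:ℝ) ≤ 1)] at hmem
    have ht0 : 0 < t := hmem.1
    have ht1 : t < 1 := lt_of_le_of_ne hmem.2 ht
    have hz : φ (t + c) = 0 := by
      apply hφ
      intro hIcc
      rcases hc with h | h
      · have := hIcc.2; linarith
      · have := hIcc.1; linarith
    rw [hz, zero_mul]
  rw [h, intervalIntegral.integral_zero]

lemma piece (φ : ℝ → ℝ) (j n k m : ℕ) :
    (∫ x in ((k:ℝ)/2^j)..(((k:ℝ)+1)/2^j), φ (2 ^ j * x - m) * walsh n x)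
      = ((2:ℝ)^j)⁻¹ * (walsh n ((k:ℝ)/2^j) *
          ∫ t in (0:ℝ)..1, φ (t + ((k:ℝ) - m)) * walsh (n / 2^j) t) := by
  set G : ℝ → ℝ := fun x => φ (2 ^ j * x - m) * walsh n x with hG
  have hjne : ((2:ℝ)^j) ≠ 0 := by positivity
  have h2 : (∫ x in ((k:ℝ))..((k:ℝ)+1), G (x / 2^j))
      = ((2:ℝ)^j) • ∫ x in ((k:ℝ)/2^j)..(((k:ℝ)+1)/2^j), G x :=
    intervalIntegral.integral_comp_div (a := (k:ℝ)) (b := (k:ℝ)+1) (f := G) hjne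
  have h1 : (∫ t in (0:ℝ)..1, G ((t + (k:ℝ)) / 2^j))
      = ∫ x in ((k:ℝ))..((k:ℝ)+1), G (x/2^j) := by
    have := intervalIntegral.integral_comp_add_right (a := (0:ℝ)) (b := 1)
      (fun x => G (x / 2^j)) (k:ℝ)
    simpa [add_comm] using this
  have h3 : (∫ t in (0:ℝ)..1, G ((t + (k:ℝ))/2^j))
      = ∫ t in (0:ℝ)..1, walsh n ((k:ℝ)/2^j) * (φ (t + ((k:ℝ) - m)) * walsh (n / 2^j) t) := by
    apply intervalIntegral.integral_congr_ae
    filter_upwards [ae_ne_one] with t ht hmem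
    rw [Set.uIoc_of_le (by norm_num : (0:ℝ) ≤ 1)] at hmem
    have ht0 : (0:ℝ) ≤ t := le_of_lt hmem.1
    have ht1 : t < 1 := lt_of_le_of_ne hmem.2 ht
    have harg : 2 ^ j * ((t + (k:ℝ)) / 2 ^ j) - m = t + ((k:ℝ) - m) := by
      field_simp
      ring
    rw [hG]
    simp only
    rw [harg, walsh_split n j k ht0 ht1]
    ring
  have h4 : (∫ t in (0:ℝ)..1, walsh n ((k:ℝ)/2^j) * (φ (t + ((k:ℝ) - m)) * walsh (n / 2^j) t))
      = walsh n ((k:ℝ)/2^j) * ∫ t in (0:ℝ)..1, φ (t + ((k:ℝ) - m)) * walsh (n / 2^j) t :=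
    intervalIntegral.integral_const_mul _ _
  have := h3.symm.trans (h1.trans h2)
  rw [h4] at h3
  rw [smul_eq_mul] at h2
  have hfinal : (∫ x in ((k:ℝ)/2^j)..(((k:ℝ)+1)/2^j), G x)
      = ((2:ℝ)^j)⁻¹ * (∫ t in (0:ℝ)..1, G ((t + (k:ℝ))/2^j)) := by
    rw [h1, h2]
    field_simp
  rw [hfinal, h3]

lemma main_m (ν : ℕ) (hν : 2 ≤ ν) (φ : ℝ → ℝ) (hL2 : MemLp φ 2 volume)
    (hsupp : ∀ᵐ x : ℝ, x ∉ Set.Icc (-(ν : ℝ) + 1) (ν : ℝ) → φ x = 0)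
    (j M : ℕ) (hM : M = 2 ^ j) (hj : 2 * ν ≤ M) (n m : ℕ)
    (hm1 : ν ≤ m) (hm2 : m ≤ M - ν - 1) :
    (∫ x in (0:ℝ)..1, φ (2 ^ j * x - m) * walsh n x)
      = ((2:ℝ)^j)⁻¹ * ∑ l ∈ Finset.Icc (-(ν:ℤ)+1) ((ν:ℤ)-1),
          (∫ x in (0:ℝ)..1, φ (x + l) * walsh (n / 2 ^ j) x) * walsh n (((l:ℝ) + m)/2^j) := by
  have hm2' : m + ν + 1 ≤ M := by omega
  have hjne : ((2:ℝ)^j) ≠ 0 := by positivity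
  have hdecomp : (∫ x in (0:ℝ)..1, φ (2 ^ j * x - m) * walsh n x)
      = ∑ k ∈ Finset.range M,
          ∫ x in (((k:ℕ):ℝ)/2^j)..((((k+1):ℕ):ℝ)/2^j), φ (2 ^ j * x - m) * walsh n x := by
    rw [intervalIntegral.sum_integral_adjacent_intervals
      (a := fun k : ℕ => ((k:ℕ):ℝ)/2^j) (μ := volume) (f := fun x => φ (2 ^ j * x - m) * walsh n x)
      (fun k _ => prod_intervalIntegrable φ hL2 j n (m:ℝ) _ _)]
    norm_num
    rw [hM]
    push_cast
    rw [div_self hjne]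
  rw [hdecomp]
  have hpiece : ∀ k : ℕ,
      (∫ x in (((k:ℕ):ℝ)/2^j)..((((k+1):ℕ):ℝ)/2^j), φ (2 ^ j * x - m) * walsh n x)
        = ((2:ℝ)^j)⁻¹ * (walsh n ((k:ℝ)/2^j) *
            ∫ t in (0:ℝ)..1, φ (t + ((k:ℝ) - m)) * walsh (n / 2^j) t) := by
    intro k
    have := piece φ j n k m
    push_cast
    push_cast at this
    exact this
  simp only [hpiece]
  have hsub : Finset.Icc (m - ν + 1) (m + ν - 1) ⊆ Finset.range M := by
    intro k hk
    simp only [Finset.mem_Icc] at hk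
    simp only [Finset.mem_range]
    omega
  rw [← Finset.sum_subset hsub]
  · rw [Finset.mul_sum]
    apply Finset.sum_nbij' (i := fun k : ℕ => (k : ℤ) - m) (j := fun l : ℤ => (m + l).toNat)
    · intro k hk
      simp only [Finset.mem_Icc] at hk ⊢
      omega
    · intro l hl
      simp only [Finset.mem_Icc] at hl ⊢
      omega
    · intro k hk
      simp only [Finset.mem_Icc] at hk
      omega
    · intro l hl
      simp only [Finset.mem_Icc] at hl
      omega
    · intro k hk
      simp only [Finset.mem_Icc] at hk
      have e1 : (((k : ℤ) - m : ℤ) : ℝ) = (k : ℝ) - m := by push_cast; ring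
      rw [e1]
      have e2 : ((k:ℝ) - m) + m = (k:ℝ) := by ring
      rw [e2]
      ring
  · intro k hk hnk
    simp only [Finset.mem_range] at hk
    simp only [Finset.mem_Icc] at hnk
    have hcase : (ν:ℝ) ≤ (k:ℝ) - m ∨ (k:ℝ) - m ≤ -(ν:ℝ) := by
      rcases (by omega : m + ν ≤ k ∨ k + ν ≤ m) with h | h
      · left
        have : (m:ℝ) + ν ≤ k := by exact_mod_cast h
        linarith
      · right
        have : (k:ℝ) + ν ≤ m := by exact_mod_cast h
        linarith
    rw [vanish ν φ hsupp _ hcase]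
    ring


/-- Splitting of the interior forward sums: for `ν ≥ 2`,
`φ ∈ L²(ℝ)` supported in `[−ν+1, ν]`, `M = 2^j ≥ 2ν` and `ξ ∈ ℂ^M`,
`Σ_{m=ν}^{M−ν−1} ⟨φ_{j,m}, w_n⟩ ξ_m
  = 2^{−j/2} Σ_{l=−ν+1}^{ν−1} ⟨φ(·+l), w_{⌊n/2^j⌋}⟩ · Σ_{m=ν}^{M−ν−1} w_n((l+m)/2^j) ξ_m`
for every `n ∈ ℕ`. -/
theorem forward_interior_split (ν : ℕ) (hν : 2 ≤ ν) (φ : ℝ → ℝ)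
    (hL2 : MemLp φ 2 volume)
    (hsupp : ∀ᵐ x : ℝ, x ∉ Set.Icc (-(ν : ℝ) + 1) (ν : ℝ) → φ x = 0)
    (j M : ℕ) (hM : M = 2 ^ j) (hj : 2 * ν ≤ M) (ξ : ℕ → ℂ) (n : ℕ) :
    ∑ m ∈ Finset.Icc ν (M - ν - 1),
        ((∫ x in (0 : ℝ)..1,
            ((2 : ℝ) ^ ((j : ℝ) / 2) * φ (2 ^ j * x - m)) * walsh n x : ℝ) : ℂ) * ξ m =
      (((2 : ℝ) ^ (-(j : ℝ) / 2) : ℝ) : ℂ) *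
        ∑ l ∈ Finset.Icc (-(ν : ℤ) + 1) ((ν : ℤ) - 1),
          ((∫ x in (0 : ℝ)..1, φ (x + l) * walsh (n / 2 ^ j) x : ℝ) : ℂ) *
            ∑ m ∈ Finset.Icc ν (M - ν - 1),
              ((walsh n (((l : ℝ) + m) / 2 ^ j) : ℝ) : ℂ) * ξ m := by
  have hconst : (2:ℝ) ^ ((j:ℝ)/2) * ((2:ℝ)^j)⁻¹ = (2:ℝ) ^ (-(j:ℝ)/2) := by
    rw [← Real.rpow_natCast 2 j, ← Real.rpow_neg (by norm_num : (0:ℝ) ≤ 2),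
        ← Real.rpow_add (by norm_num : (0:ℝ) < 2)]
    congr 1
    ring
  have hint : ∀ m : ℕ,
      (∫ x in (0:ℝ)..1, ((2:ℝ)^((j:ℝ)/2) * φ (2 ^ j * x - m)) * walsh n x)
        = (2:ℝ)^((j:ℝ)/2) * ∫ x in (0:ℝ)..1, φ (2 ^ j * x - m) * walsh n x := by
    intro m
    rw [← intervalIntegral.integral_const_mul]
    apply intervalIntegral.integral_congr
    intro x _
    ring
  have key : ∀ m : ℕ, ν ≤ m → m ≤ M - ν - 1 →
      (∫ x in (0:ℝ)..1, ((2:ℝ)^((j:ℝ)/2) * φ (2 ^ j * x - m)) * walsh n x)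
      = (2:ℝ)^(-(j:ℝ)/2) * ∑ l ∈ Finset.Icc (-(ν:ℤ)+1) ((ν:ℤ)-1),
          (∫ x in (0:ℝ)..1, φ (x + l) * walsh (n / 2 ^ j) x) * walsh n (((l:ℝ) + m)/2^j) := by
    intro m h1 h2
    rw [hint m, main_m ν hν φ hL2 hsupp j M hM hj n m h1 h2, ← mul_assoc, hconst]
  apply Eq.trans (b := ∑ m ∈ Finset.Icc ν (M - ν - 1),
      ∑ l ∈ Finset.Icc (-(ν:ℤ)+1) ((ν:ℤ)-1),
        (((2:ℝ) ^ (-(j:ℝ)/2) : ℝ) : ℂ) *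
          (((∫ x in (0:ℝ)..1, φ (x + l) * walsh (n / 2 ^ j) x : ℝ) : ℂ) *
            (((walsh n (((l:ℝ) + m) / 2 ^ j) : ℝ) : ℂ) * ξ m)))
  · apply Finset.sum_congr rfl
    intro m hm
    simp only [Finset.mem_Icc] at hm
    rw [key m hm.1 hm.2]
    push_cast
    rw [mul_assoc, Finset.sum_mul, Finset.mul_sum]
    apply Finset.sum_congr rfl
    intro l _
    ring
  · rw [Finset.sum_comm]
    simp only [Finset.mul_sum]
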